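/- Let t₁₁, t₂₂, t₃₃ be real numbers such that ρ := (1/4)I₄ + t₁₁σ₁⊗σ₁ + t₂₂σ₂⊗σ₂ + t₃₃σ₃⊗σ₃ is a density matrix on ℂ² ⊗ ℂ². Then the eigenvalues of ρ are (1/4)(1 − 4(t₁₁+t₂₂+t₃₃)), (1/4)(1 + 4(t₁₁+t₂₂−t₃₃)), (1/4)(1 + 4(t₁₁−t₂₂+t₃₃)), and (1/4)(1 + 4(−t₁₁+t₂₂+t₃₃)); moreover ρ ∈ 𝔄𝔉₂ if and only if max{−(t₁₁+t₂₂+t₃₃), t₁₁+t₂₂−t₃₃, t₁₁−t₂₂+t₃₃, −t₁₁+t₂₂+t₃₃} ≤ 1/4. -/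

import Mathlib

open Matrix Kronecker Complex
open scoped ComplexOrder

/-- The canonical maximally entangled vector `|ψ⁺⟩ = (1/√d) ∑ᵢ |ii⟩` on `ℂ^d ⊗ ℂ^d`. -/
noncomputable def psiPlus (d : ℕ) : (Fin d × Fin d) → ℂ :=
  fun p => if p.1 = p.2 then ((Real.sqrt d)⁻¹ : ℝ) else 0

/-- The fully entangled fraction: the supremum over `d × d` unitaries `V` of
`⟨ψ⁺| (I ⊗ V)† ρ (I ⊗ V) |ψ⁺⟩`. -/
noncomputable def fef (d : ℕ) (ρ : Matrix (Fin d × Fin d) (Fin d × Fin d) ℂ) : ℝ :=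
  ⨆ V : Matrix.unitaryGroup (Fin d) ℂ,
    (star (psiPlus d) ⬝ᵥ
      ((((1 : Matrix (Fin d) (Fin d) ℂ) ⊗ₖ (V : Matrix (Fin d) (Fin d) ℂ))ᴴ * ρ *
        ((1 : Matrix (Fin d) (Fin d) ℂ) ⊗ₖ (V : Matrix (Fin d) (Fin d) ℂ))) *ᵥ psiPlus d)).re

/-- A density matrix: positive semidefinite with unit trace. -/
def IsDensityMatrix {n : Type*} [Fintype n] (ρ : Matrix n n ℂ) : Prop :=
  ρ.PosSemidef ∧ ρ.trace = 1

/-- `ρ` has absolute fully entangled fraction: `F(UρU†) ≤ 1/d` for every unitary `U`. -/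
def AbsFEF (d : ℕ) (ρ : Matrix (Fin d × Fin d) (Fin d × Fin d) ℂ) : Prop :=
  ∀ U ∈ Matrix.unitaryGroup (Fin d × Fin d) ℂ, fef d (U * ρ * Uᴴ) ≤ 1 / d

/-- Basis vector `|ij⟩` of `ℂ^d ⊗ ℂ^d`. -/
def ket (d : ℕ) (i j : Fin d) : (Fin d × Fin d) → ℂ :=
  fun p => if p = (i, j) then 1 else 0

/-- Rank-one projector `|v⟩⟨v|`. -/
def proj {n : Type*} (v : n → ℂ) : Matrix n n ℂ :=
  Matrix.vecMulVec v (star v)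

/-- The Pauli matrices. -/
def pauli1 : Matrix (Fin 2) (Fin 2) ℂ := !![0, 1; 1, 0]
def pauli2 : Matrix (Fin 2) (Fin 2) ℂ := !![0, -Complex.I; Complex.I, 0]
def pauli3 : Matrix (Fin 2) (Fin 2) ℂ := !![1, 0; 0, -1]

/-- The Bell-diagonal-type state `ρ = (1/4)I + t₁₁σ₁⊗σ₁ + t₂₂σ₂⊗σ₂ + t₃₃σ₃⊗σ₃`. -/
noncomputable def bellDiag (t₁₁ t₂₂ t₃₃ : ℝ) : Matrix (Fin 2 × Fin 2) (Fin 2 × Fin 2) ℂ :=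
  (1/4 : ℂ) • (1 : Matrix (Fin 2 × Fin 2) (Fin 2 × Fin 2) ℂ) +
    (t₁₁ : ℂ) • (pauli1 ⊗ₖ pauli1) + (t₂₂ : ℂ) • (pauli2 ⊗ₖ pauli2) +
    (t₃₃ : ℂ) • (pauli3 ⊗ₖ pauli3)

/-! ### Auxiliary material -/

set_option maxHeartbeats 1000000
set_option linter.unusedSectionVars false

namespace BellAux

section Generic

variable {n : Type*} [Fintype n] [DecidableEq n]

lemma sum_mulVec {α : Type*} (s : Finset α) (f : α → Matrix n n ℂ) (x : n → ℂ) :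
    (∑ a ∈ s, f a) *ᵥ x = ∑ a ∈ s, f a *ᵥ x := by
  ext i
  simp only [Matrix.mulVec, dotProduct, Matrix.sum_apply, Finset.sum_apply, Finset.sum_mul]
  exact Finset.sum_comm

lemma dotProduct_sum {α : Type*} (s : Finset α) (u : n → ℂ) (v : α → n → ℂ) :
    u ⬝ᵥ (∑ a ∈ s, v a) = ∑ a ∈ s, u ⬝ᵥ v a := by
  simp only [dotProduct, Finset.sum_apply, Finset.mul_sum]
  exact Finset.sum_comm

lemma proj_mulVec (v x : n → ℂ) : proj v *ᵥ x = (star v ⬝ᵥ x) • v := by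
  ext i
  simp only [proj, Matrix.mulVec, Matrix.vecMulVec_apply, dotProduct, Pi.smul_apply,
    smul_eq_mul, Finset.sum_mul]
  exact Finset.sum_congr rfl fun j _ => by ring

lemma proj_conjTranspose (v : n → ℂ) : (proj v)ᴴ = proj v := by
  ext i j
  simp [proj, Matrix.conjTranspose_apply, Matrix.vecMulVec_apply, mul_comm]

lemma star_ip (A : Matrix n n ℂ) (z y : n → ℂ) :
    star (A *ᵥ z) ⬝ᵥ y = star z ⬝ᵥ (Aᴴ *ᵥ y) := by
  rw [star_mulVec, ← dotProduct_mulVec]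

lemma conj_dot (A M : Matrix n n ℂ) (z : n → ℂ) :
    star (A *ᵥ z) ⬝ᵥ (M *ᵥ (A *ᵥ z)) = star z ⬝ᵥ ((Aᴴ * M * A) *ᵥ z) := by
  rw [star_ip, mulVec_mulVec, mulVec_mulVec, Matrix.mul_assoc]

open Polynomial in
lemma posSemidef_sum_smul_proj (c : n → ℝ) (hc : ∀ q, 0 ≤ c q) (v : n → n → ℂ) :
    (∑ q, ((c q : ℝ) : ℂ) • proj (v q)).PosSemidef := by
  rw [posSemidef_iff_dotProduct_mulVec]
  constructor
  · show _ = _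
    rw [conjTranspose_sum]
    refine Finset.sum_congr rfl fun q _ => ?_
    rw [conjTranspose_smul, proj_conjTranspose, Complex.star_def, Complex.conj_ofReal]
  · intro x
    rw [sum_mulVec, dotProduct_sum]
    refine Finset.sum_nonneg fun q _ => ?_
    rw [smul_mulVec, dotProduct_smul, proj_mulVec, dotProduct_smul]
    have h1 : star x ⬝ᵥ v q = star (star (v q) ⬝ᵥ x) := by
      rw [← star_dotProduct_star, star_star]
    rw [smul_eq_mul, smul_eq_mul, h1]
    exact mul_nonneg (by exact_mod_cast Complex.zero_le_real.2 (hc q))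
      (mul_star_self_nonneg _)

lemma re_dot_le (M : Matrix n n ℂ) (c : ℝ) (h : (((c : ℝ) : ℂ) • 1 - M).PosSemidef)
    (u : n → ℂ) (hu : star u ⬝ᵥ u = 1) : (star u ⬝ᵥ (M *ᵥ u)).re ≤ c := by
  have h2 := (posSemidef_iff_dotProduct_mulVec.mp h).2 u
  rw [Matrix.sub_mulVec, dotProduct_sub, smul_mulVec, one_mulVec, dotProduct_smul,
    hu, smul_eq_mul, mul_one] at h2
  have h3 := (Complex.le_def.mp h2).1
  simp only [Complex.zero_re, Complex.sub_re, Complex.ofReal_re] at h3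
  linarith

open Polynomial in
lemma charpoly_conj (P Q A : Matrix n n ℂ) (h : P * Q = 1) :
    (P * A * Q).charpoly = A.charpoly := by
  have hm : charmatrix (P * A * Q) =
      (C : ℂ →+* ℂ[X]).mapMatrix P * charmatrix A * (C : ℂ →+* ℂ[X]).mapMatrix Q := by
    have hPQ : (C : ℂ →+* ℂ[X]).mapMatrix P * (C : ℂ →+* ℂ[X]).mapMatrix Q = 1 := by
      rw [← _root_.map_mul, h, _root_.map_one]
    unfold charmatrix
    rw [_root_.map_mul, _root_.map_mul, Matrix.mul_sub, Matrix.sub_mul, Matrix.mul_assoc]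
    congr 1
    rw [Matrix.mul_assoc, Matrix.scalar_commute (X : ℂ[X]) (fun r => Commute.all _ _)
      ((C : ℂ →+* ℂ[X]).mapMatrix Q), ← Matrix.mul_assoc, hPQ, Matrix.one_mul]
  have hdet : ((C : ℂ →+* ℂ[X]).mapMatrix P).det * ((C : ℂ →+* ℂ[X]).mapMatrix Q).det = 1 := by
    rw [← Matrix.det_mul, ← _root_.map_mul, h, _root_.map_one, Matrix.det_one]
  unfold Matrix.charpoly
  rw [hm, Matrix.det_mul, Matrix.det_mul]
  rw [mul_comm, ← mul_assoc, mul_comm _ ((C : ℂ →+* ℂ[X]).mapMatrix P).det, hdet, one_mul]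

open Polynomial in
lemma charpoly_diagonal (d : n → ℂ) :
    (Matrix.diagonal d).charpoly = ∏ q, (X - C (d q)) := by
  have hcm : charmatrix (Matrix.diagonal d) = Matrix.diagonal fun q => X - C (d q) := by
    ext i j
    by_cases hij : i = j
    · subst hij; simp
    · simp [Matrix.charmatrix_apply_ne _ _ _ hij, Matrix.diagonal_apply_ne _ hij]
  rw [Matrix.charpoly, hcm, Matrix.det_diagonal]

end Generic

/-! ### Bell basis -/

def bell : (Fin 2 × Fin 2) → (Fin 2 × Fin 2) → ℂ := fun q p =>
  (![![!![0,1;-1,0], !![0,1;1,0]], ![!![1,0;0,1], !![1,0;0,-1]]] :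
    Fin 2 → Fin 2 → Matrix (Fin 2) (Fin 2) ℂ) q.1 q.2 p.1 p.2

noncomputable def lamv (t₁₁ t₂₂ t₃₃ : ℝ) : (Fin 2 × Fin 2) → ℝ := fun q =>
  (![![1/4 - (t₁₁+t₂₂+t₃₃), 1/4 + (t₁₁+t₂₂-t₃₃)],
     ![1/4 + (t₁₁-t₂₂+t₃₃), 1/4 + (-t₁₁+t₂₂+t₃₃)]] : Fin 2 → Fin 2 → ℝ) q.1 q.2

/-- Candidate local unitaries rotating `ψ⁺` onto the Bell basis. -/
def Vmat : (Fin 2 × Fin 2) → Matrix (Fin 2) (Fin 2) ℂ := fun q =>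
  (![![!![0,-1;1,0], !![0,1;1,0]], ![!![1,0;0,1], !![1,0;0,-1]]] :
    Fin 2 → Fin 2 → Matrix (Fin 2) (Fin 2) ℂ) q.1 q.2

variable (t₁₁ t₂₂ t₃₃ : ℝ)

lemma bellDiag_eq :
    bellDiag t₁₁ t₂₂ t₃₃
      = ∑ q : Fin 2 × Fin 2, ((lamv t₁₁ t₂₂ t₃₃ q : ℂ)/2) • proj (bell q) := by
  ext ⟨i,j⟩ ⟨k,l⟩
  fin_cases i <;> fin_cases j <;> fin_cases k <;> fin_cases l <;>
    simp [bellDiag, proj, bell, lamv, pauli1, pauli2, pauli3, Matrix.sum_apply,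
      Fintype.sum_prod_type, Fin.sum_univ_two, Matrix.vecMulVec_apply, Matrix.one_apply,
      Matrix.kroneckerMap_apply, Matrix.smul_apply, Matrix.add_apply, Prod.ext_iff] <;>
    first | decide | (push_cast; ring)

lemma gram (q r : Fin 2 × Fin 2) : star (bell q) ⬝ᵥ bell r = if q = r then 2 else 0 := by
  rcases q with ⟨a,b⟩; rcases r with ⟨c,d⟩
  fin_cases a <;> fin_cases b <;> fin_cases c <;> fin_cases d <;>
    simp [bell, dotProduct, Fintype.sum_prod_type, Fin.sum_univ_two, Prod.ext_iff] <;> norm_num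

lemma sum_proj : ∑ q : Fin 2 × Fin 2, proj (bell q) = (2:ℂ) • 1 := by
  ext ⟨i,j⟩ ⟨k,l⟩
  fin_cases i <;> fin_cases j <;> fin_cases k <;> fin_cases l <;>
    simp [proj, bell, Matrix.sum_apply, Fintype.sum_prod_type, Fin.sum_univ_two,
      Matrix.vecMulVec_apply, Matrix.one_apply, Prod.ext_iff] <;> norm_num

lemma mulVec_bell (q : Fin 2 × Fin 2) :
    bellDiag t₁₁ t₂₂ t₃₃ *ᵥ bell q = ((lamv t₁₁ t₂₂ t₃₃ q : ℝ) : ℂ) • bell q := by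
  rw [bellDiag_eq, sum_mulVec]
  have key : ∀ r, (((lamv t₁₁ t₂₂ t₃₃ r : ℂ)/2) • proj (bell r)) *ᵥ bell q
      = (if r = q then ((lamv t₁₁ t₂₂ t₃₃ r : ℝ) : ℂ) else 0) • bell r := by
    intro r
    rw [smul_mulVec, proj_mulVec, gram]
    split_ifs with h
    · rw [smul_smul]; congr 1; ring
    · simp
  simp_rw [key, ite_smul, zero_smul]
  rw [Finset.sum_ite_eq' Finset.univ q]
  simp

lemma lamv_sum : ∑ q, lamv t₁₁ t₂₂ t₃₃ q = 1 := by
  simp [lamv, Fintype.sum_prod_type, Fin.sum_univ_two]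
  ring

lemma lamv_nonneg (hρ : (bellDiag t₁₁ t₂₂ t₃₃).PosSemidef) (q : Fin 2 × Fin 2) :
    0 ≤ lamv t₁₁ t₂₂ t₃₃ q := by
  have h := (posSemidef_iff_dotProduct_mulVec.mp hρ).2 (bell q)
  rw [mulVec_bell, dotProduct_smul, gram, if_pos rfl, smul_eq_mul] at h
  have h3 := (Complex.le_def.mp h).1
  simp only [Complex.zero_re, Complex.mul_re, Complex.ofReal_re, Complex.ofReal_im] at h3
  norm_num at h3
  linarith

lemma lamv_le_one (hρ : (bellDiag t₁₁ t₂₂ t₃₃).PosSemidef) (q : Fin 2 × Fin 2) :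
    lamv t₁₁ t₂₂ t₃₃ q ≤ 1 := by
  have h := Finset.single_le_sum (f := lamv t₁₁ t₂₂ t₃₃)
    (fun r _ => lamv_nonneg t₁₁ t₂₂ t₃₃ hρ r) (Finset.mem_univ q)
  rw [lamv_sum] at h
  exact h

lemma combo_eq (c : ℝ) :
    ((c : ℝ) : ℂ) • (1 : Matrix (Fin 2 × Fin 2) (Fin 2 × Fin 2) ℂ) - bellDiag t₁₁ t₂₂ t₃₃
      = ∑ q, ((((c - lamv t₁₁ t₂₂ t₃₃ q)/2 : ℝ)) : ℂ) • proj (bell q) := by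
  rw [bellDiag_eq]
  have h1 : ((c : ℝ) : ℂ) • (1 : Matrix (Fin 2 × Fin 2) (Fin 2 × Fin 2) ℂ)
      = ∑ q, (((c/2 : ℝ)) : ℂ) • proj (bell q) := by
    rw [← Finset.smul_sum, sum_proj, smul_smul]
    congr 1
    push_cast; ring
  rw [h1, ← Finset.sum_sub_distrib]
  refine Finset.sum_congr rfl fun q _ => ?_
  rw [← sub_smul]
  congr 1
  push_cast; ring

lemma psd_shift (c : ℝ) (hc : ∀ q, lamv t₁₁ t₂₂ t₃₃ q ≤ c) :
    (((c : ℝ) : ℂ) • (1 : Matrix (Fin 2 × Fin 2) (Fin 2 × Fin 2) ℂ)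
      - bellDiag t₁₁ t₂₂ t₃₃).PosSemidef := by
  rw [combo_eq]
  exact posSemidef_sum_smul_proj _ (fun q => by have := hc q; linarith) _

/-! ### fef manipulations -/

lemma psi_dot : star (psiPlus 2) ⬝ᵥ psiPlus 2 = 1 := by
  have h2 : ((Real.sqrt 2)⁻¹ : ℝ) * (Real.sqrt 2)⁻¹ = 1/2 := by
    rw [← mul_inv, Real.mul_self_sqrt (by norm_num)]
    norm_num
  simp [psiPlus, dotProduct, Fintype.sum_prod_type, Fin.sum_univ_two, Complex.star_def,
    Complex.conj_ofReal]
  rw [← Complex.ofReal_inv, ← Complex.ofReal_mul, h2]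
  norm_num

lemma kron_conjTranspose (V : Matrix (Fin 2) (Fin 2) ℂ) :
    ((1 : Matrix (Fin 2) (Fin 2) ℂ) ⊗ₖ V)ᴴ = (1 : Matrix (Fin 2) (Fin 2) ℂ) ⊗ₖ Vᴴ := by
  ext ⟨a,b⟩ ⟨c,d⟩
  simp only [Matrix.conjTranspose_apply, Matrix.kroneckerMap_apply, Matrix.one_apply, star_mul']
  split_ifs with h h' h' <;> simp_all [eq_comm]

lemma kron_unitary (V : Matrix (Fin 2) (Fin 2) ℂ) (hV : V ∈ Matrix.unitaryGroup (Fin 2) ℂ) :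
    ((1 : Matrix (Fin 2) (Fin 2) ℂ) ⊗ₖ V)ᴴ * ((1 : Matrix (Fin 2) (Fin 2) ℂ) ⊗ₖ V) = 1 := by
  rw [kron_conjTranspose, ← Matrix.mul_kronecker_mul, Matrix.one_mul,
    show Vᴴ * V = 1 from Matrix.mem_unitaryGroup_iff'.mp hV, Matrix.one_kronecker_one]

lemma Wpsi_unit (V : Matrix (Fin 2) (Fin 2) ℂ) (hV : V ∈ Matrix.unitaryGroup (Fin 2) ℂ) :
    star (((1 : Matrix (Fin 2) (Fin 2) ℂ) ⊗ₖ V) *ᵥ psiPlus 2) ⬝ᵥ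
      (((1 : Matrix (Fin 2) (Fin 2) ℂ) ⊗ₖ V) *ᵥ psiPlus 2) = 1 := by
  have h := conj_dot ((1 : Matrix (Fin 2) (Fin 2) ℂ) ⊗ₖ V) 1 (psiPlus 2)
  rw [one_mulVec] at h
  rw [h, Matrix.mul_one, kron_unitary V hV, one_mulVec, psi_dot]

lemma fef_le_of_psd (ρ : Matrix (Fin 2 × Fin 2) (Fin 2 × Fin 2) ℂ) (c : ℝ)
    (hc : (((c : ℝ) : ℂ) • 1 - ρ).PosSemidef)
    (U : Matrix (Fin 2 × Fin 2) (Fin 2 × Fin 2) ℂ)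
    (hU : U ∈ Matrix.unitaryGroup (Fin 2 × Fin 2) ℂ) :
    fef 2 (U * ρ * Uᴴ) ≤ c := by
  unfold fef
  apply ciSup_le
  intro V
  set W := (1 : Matrix (Fin 2) (Fin 2) ℂ) ⊗ₖ (V : Matrix (Fin 2) (Fin 2) ℂ) with hW
  set z := W *ᵥ psiPlus 2 with hz
  set u := Uᴴ *ᵥ z with hu
  have hval : star (psiPlus 2) ⬝ᵥ ((Wᴴ * (U * ρ * Uᴴ) * W) *ᵥ psiPlus 2)
      = star u ⬝ᵥ (ρ *ᵥ u) := by
    rw [← conj_dot W (U * ρ * Uᴴ) (psiPlus 2)]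
    have h2 := conj_dot Uᴴ ρ z
    rw [conjTranspose_conjTranspose] at h2
    rw [← hz, ← h2, ← hu]
  have hunit : star u ⬝ᵥ u = 1 := by
    have h3 := conj_dot Uᴴ 1 z
    rw [one_mulVec, conjTranspose_conjTranspose] at h3
    rw [hu, h3, Matrix.mul_one,
      show U * Uᴴ = 1 by rw [← Matrix.star_eq_conjTranspose]; exact
        Matrix.mem_unitaryGroup_iff.mp hU,
      one_mulVec, Wpsi_unit (V : Matrix (Fin 2) (Fin 2) ℂ) V.2]
  rw [hval]
  exact re_dot_le ρ c hc u hunit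

/-! ### explicit local unitaries -/

lemma Vmat_mem (q : Fin 2 × Fin 2) : Vmat q ∈ Matrix.unitaryGroup (Fin 2) ℂ := by
  rw [Matrix.mem_unitaryGroup_iff']
  rcases q with ⟨a,b⟩
  fin_cases a <;> fin_cases b <;>
    · ext i j
      fin_cases i <;> fin_cases j <;>
      simp [Vmat, Matrix.mul_apply, Fin.sum_univ_two, Matrix.one_apply] <;> norm_num

lemma W_psi (q : Fin 2 × Fin 2) :
    ((1 : Matrix (Fin 2) (Fin 2) ℂ) ⊗ₖ Vmat q) *ᵥ psiPlus 2
      = (((Real.sqrt 2)⁻¹ : ℝ) : ℂ) • bell q := by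
  rcases q with ⟨a,b⟩
  fin_cases a <;> fin_cases b <;>
    · ext ⟨i,j⟩
      fin_cases i <;> fin_cases j <;>
        simp [Vmat, psiPlus, bell, Matrix.mulVec, dotProduct, Fintype.sum_prod_type,
          Fin.sum_univ_two, Matrix.kroneckerMap_apply, Matrix.one_apply] <;> norm_num

lemma fef_ge (ρ : Matrix (Fin 2 × Fin 2) (Fin 2 × Fin 2) ℂ)
    (hbdd : BddAbove (Set.range fun V : Matrix.unitaryGroup (Fin 2) ℂ =>
      (star (psiPlus 2) ⬝ᵥ
        ((((1 : Matrix (Fin 2) (Fin 2) ℂ) ⊗ₖ (V : Matrix (Fin 2) (Fin 2) ℂ))ᴴ * ρ *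
          ((1 : Matrix (Fin 2) (Fin 2) ℂ) ⊗ₖ (V : Matrix (Fin 2) (Fin 2) ℂ))) *ᵥ psiPlus 2)).re))
    (V₀ : Matrix.unitaryGroup (Fin 2) ℂ) :
    (star (psiPlus 2) ⬝ᵥ
        ((((1 : Matrix (Fin 2) (Fin 2) ℂ) ⊗ₖ (V₀ : Matrix (Fin 2) (Fin 2) ℂ))ᴴ * ρ *
          ((1 : Matrix (Fin 2) (Fin 2) ℂ) ⊗ₖ (V₀ : Matrix (Fin 2) (Fin 2) ℂ))) *ᵥ psiPlus 2)).re
      ≤ fef 2 ρ := by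
  unfold fef
  exact le_ciSup hbdd V₀

/-! ### Diagonalization and characteristic polynomial -/

def Bm : Matrix (Fin 2 × Fin 2) (Fin 2 × Fin 2) ℂ := Matrix.of fun p q => bell q p

lemma Bm_mul_conjTranspose : Bm * Bmᴴ = (2:ℂ) • 1 := by
  ext p p'
  have hs : (∑ q, proj (bell q)) p p'
      = ((2:ℂ) • (1 : Matrix (Fin 2 × Fin 2) (Fin 2 × Fin 2) ℂ)) p p' := by
    rw [sum_proj]
  rw [Matrix.mul_apply, ← hs, Matrix.sum_apply]
  exact Finset.sum_congr rfl fun q _ => by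
    simp [Bm, proj, Matrix.conjTranspose_apply, Matrix.vecMulVec_apply]

lemma Bm_inv : Bm * ((1/2 : ℂ) • Bmᴴ) = 1 := by
  rw [Matrix.mul_smul, Bm_mul_conjTranspose, smul_smul]
  norm_num

lemma bellDiag_mul_Bm :
    bellDiag t₁₁ t₂₂ t₃₃ * Bm
      = Bm * Matrix.diagonal (fun q => ((lamv t₁₁ t₂₂ t₃₃ q : ℝ) : ℂ)) := by
  ext p q
  rw [Matrix.mul_diagonal]
  have h := congrFun (mulVec_bell t₁₁ t₂₂ t₃₃ q) p
  simp only [Matrix.mulVec, dotProduct, Pi.smul_apply, smul_eq_mul] at h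
  rw [Matrix.mul_apply]
  simpa [Bm, mul_comm] using h

lemma bellDiag_factor :
    bellDiag t₁₁ t₂₂ t₃₃
      = Bm * Matrix.diagonal (fun q => ((lamv t₁₁ t₂₂ t₃₃ q : ℝ) : ℂ))
          * ((1/2 : ℂ) • Bmᴴ) := by
  calc bellDiag t₁₁ t₂₂ t₃₃ = bellDiag t₁₁ t₂₂ t₃₃ * (Bm * ((1/2 : ℂ) • Bmᴴ)) := by
        rw [Bm_inv, Matrix.mul_one]
    _ = (bellDiag t₁₁ t₂₂ t₃₃ * Bm) * ((1/2 : ℂ) • Bmᴴ) := by rw [Matrix.mul_assoc]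
    _ = _ := by rw [bellDiag_mul_Bm]

open Polynomial in
lemma charpoly_bellDiag :
    (bellDiag t₁₁ t₂₂ t₃₃).charpoly
      = ∏ q, (X - C ((lamv t₁₁ t₂₂ t₃₃ q : ℝ) : ℂ)) := by
  rw [bellDiag_factor t₁₁ t₂₂ t₃₃, charpoly_conj _ _ _ Bm_inv, charpoly_diagonal]

open Polynomial in
lemma eig_multiset (hH : (bellDiag t₁₁ t₂₂ t₃₃).IsHermitian) :
    Finset.univ.val.map hH.eigenvalues = Finset.univ.val.map (lamv t₁₁ t₂₂ t₃₃) := by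
  have hPQ : (hH.eigenvectorUnitary : Matrix (Fin 2 × Fin 2) (Fin 2 × Fin 2) ℂ)
      * star (hH.eigenvectorUnitary : Matrix (Fin 2 × Fin 2) (Fin 2 × Fin 2) ℂ) = 1 :=
    Matrix.mem_unitaryGroup_iff.mp hH.eigenvectorUnitary.2
  have h1 : (bellDiag t₁₁ t₂₂ t₃₃).charpoly
      = ∏ q, (X - C ((hH.eigenvalues q : ℝ) : ℂ)) := by
    conv_lhs => rw [hH.spectral_theorem, Unitary.conjStarAlgAut_apply]
    rw [charpoly_conj _ _ _ hPQ, charpoly_diagonal]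
    rfl
  have h2 := h1.symm.trans (charpoly_bellDiag t₁₁ t₂₂ t₃₃)
  rw [Finset.prod_eq_multiset_prod, Finset.prod_eq_multiset_prod] at h2
  have e1 : Finset.univ.val.map (fun q => X - C ((hH.eigenvalues q : ℝ) : ℂ))
      = (Finset.univ.val.map fun q => ((hH.eigenvalues q : ℝ) : ℂ)).map
          (fun a => X - C a) := by
    rw [Multiset.map_map]; rfl
  have e2 : Finset.univ.val.map (fun q => X - C ((lamv t₁₁ t₂₂ t₃₃ q : ℝ) : ℂ))
      = (Finset.univ.val.map fun q => ((lamv t₁₁ t₂₂ t₃₃ q : ℝ) : ℂ)).map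
          (fun a => X - C a) := by
    rw [Multiset.map_map]; rfl
  rw [e1, e2] at h2
  have h5 := congrArg Polynomial.roots h2
  rw [Polynomial.roots_multiset_prod_X_sub_C, Polynomial.roots_multiset_prod_X_sub_C] at h5
  apply Multiset.map_injective Complex.ofReal_injective
  rw [Multiset.map_map, Multiset.map_map]
  exact h5

/-! ### value of the fef term at the explicit local unitaries -/

lemma term_eq (q : Fin 2 × Fin 2) :
    (star (psiPlus 2) ⬝ᵥ
      ((((1 : Matrix (Fin 2) (Fin 2) ℂ) ⊗ₖ Vmat q)ᴴ * bellDiag t₁₁ t₂₂ t₃₃ *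
        ((1 : Matrix (Fin 2) (Fin 2) ℂ) ⊗ₖ Vmat q)) *ᵥ psiPlus 2)).re
      = lamv t₁₁ t₂₂ t₃₃ q := by
  have ha : ((Real.sqrt 2)⁻¹ : ℝ) * (Real.sqrt 2)⁻¹ = 1/2 := by
    rw [← mul_inv, Real.mul_self_sqrt (by norm_num)]
    norm_num
  rw [← conj_dot, W_psi q, Matrix.mulVec_smul, mulVec_bell, star_smul, smul_dotProduct,
    dotProduct_smul, dotProduct_smul, gram, if_pos rfl]
  simp only [smul_eq_mul, Complex.star_def, Complex.conj_ofReal]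
  have hc : (((Real.sqrt 2)⁻¹ : ℝ) : ℂ) * ((((Real.sqrt 2)⁻¹ : ℝ) : ℂ) *
      (((lamv t₁₁ t₂₂ t₃₃ q : ℝ) : ℂ) * 2))
      = (((Real.sqrt 2)⁻¹ * (Real.sqrt 2)⁻¹ * (lamv t₁₁ t₂₂ t₃₃ q * 2) : ℝ) : ℂ) := by
    push_cast; ring
  rw [hc, Complex.ofReal_re]
  linear_combination (lamv t₁₁ t₂₂ t₃₃ q * 2) * ha

end BellAux

open BellAux in
/-- Eigenvalues of `(1/4)I + Σ tᵢᵢ σᵢ⊗σᵢ` and its membership in `𝔄𝔉₂`: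
the eigenvalues are `(1 ∓ 4(±t₁₁ ± t₂₂ ± t₃₃))/4` as stated, and the state lies in `𝔄𝔉₂`
iff `max{−(t₁₁+t₂₂+t₃₃), t₁₁+t₂₂−t₃₃, t₁₁−t₂₂+t₃₃, −t₁₁+t₂₂+t₃₃} ≤ 1/4`. -/
theorem bellDiag_absFEF_iff (t₁₁ t₂₂ t₃₃ : ℝ)
    (hρ : IsDensityMatrix (bellDiag t₁₁ t₂₂ t₃₃)) :
    (Finset.univ.val.map hρ.1.isHermitian.eigenvalues : Multiset ℝ) =
      {(1 - 4*(t₁₁ + t₂₂ + t₃₃))/4, (1 + 4*(t₁₁ + t₂₂ - t₃₃))/4,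
       (1 + 4*(t₁₁ - t₂₂ + t₃₃))/4, (1 + 4*(-t₁₁ + t₂₂ + t₃₃))/4} ∧
    (AbsFEF 2 (bellDiag t₁₁ t₂₂ t₃₃) ↔
      max (max (-(t₁₁ + t₂₂ + t₃₃)) (t₁₁ + t₂₂ - t₃₃))
        (max (t₁₁ - t₂₂ + t₃₃) (-t₁₁ + t₂₂ + t₃₃)) ≤ 1/4) := by
  constructor
  · rw [eig_multiset t₁₁ t₂₂ t₃₃ hρ.1.isHermitian]
    have huniv : (Finset.univ.val : Multiset (Fin 2 × Fin 2))
        = {((0:Fin 2),(0:Fin 2)), (0,1), (1,0), (1,1)} := by decide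
    rw [huniv]
    simp only [Multiset.map_cons, Multiset.map_singleton, Multiset.insert_eq_cons]
    have e0 : lamv t₁₁ t₂₂ t₃₃ (0,0) = (1 - 4*(t₁₁ + t₂₂ + t₃₃))/4 := by
      simp [lamv]; ring
    have e1 : lamv t₁₁ t₂₂ t₃₃ (0,1) = (1 + 4*(t₁₁ + t₂₂ - t₃₃))/4 := by
      simp [lamv]; ring
    have e2 : lamv t₁₁ t₂₂ t₃₃ (1,0) = (1 + 4*(t₁₁ - t₂₂ + t₃₃))/4 := by
      simp [lamv]; ring
    have e3 : lamv t₁₁ t₂₂ t₃₃ (1,1) = (1 + 4*(-t₁₁ + t₂₂ + t₃₃))/4 := by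
      simp [lamv]; ring
    rw [e0, e1, e2, e3]
  · constructor
    · intro habs
      have hb1 : (((1:ℝ):ℂ) • 1 - bellDiag t₁₁ t₂₂ t₃₃).PosSemidef :=
        psd_shift t₁₁ t₂₂ t₃₃ 1 (lamv_le_one t₁₁ t₂₂ t₃₃ hρ.1)
      have hbdd : BddAbove (Set.range fun V : Matrix.unitaryGroup (Fin 2) ℂ =>
          (star (psiPlus 2) ⬝ᵥ
            ((((1 : Matrix (Fin 2) (Fin 2) ℂ) ⊗ₖ (V : Matrix (Fin 2) (Fin 2) ℂ))ᴴ *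
              bellDiag t₁₁ t₂₂ t₃₃ *
              ((1 : Matrix (Fin 2) (Fin 2) ℂ) ⊗ₖ (V : Matrix (Fin 2) (Fin 2) ℂ))) *ᵥ
                psiPlus 2)).re) := by
        refine ⟨1, ?_⟩
        rintro y ⟨V, rfl⟩
        dsimp only
        rw [← conj_dot]
        exact re_dot_le _ 1 hb1 _ (Wpsi_unit _ V.2)
      have hf : fef 2 (bellDiag t₁₁ t₂₂ t₃₃) ≤ 1/2 := by
        have h := habs 1 (one_mem _)
        rw [Matrix.conjTranspose_one, Matrix.mul_one, Matrix.one_mul] at h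
        norm_num at h
        linarith
      have hq : ∀ q, lamv t₁₁ t₂₂ t₃₃ q ≤ 1/2 := by
        intro q
        have hle := fef_ge (bellDiag t₁₁ t₂₂ t₃₃) hbdd ⟨Vmat q, Vmat_mem q⟩
        calc lamv t₁₁ t₂₂ t₃₃ q
            = (star (psiPlus 2) ⬝ᵥ
                ((((1 : Matrix (Fin 2) (Fin 2) ℂ) ⊗ₖ Vmat q)ᴴ * bellDiag t₁₁ t₂₂ t₃₃ *
                  ((1 : Matrix (Fin 2) (Fin 2) ℂ) ⊗ₖ Vmat q)) *ᵥ psiPlus 2)).re :=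
              (term_eq t₁₁ t₂₂ t₃₃ q).symm
          _ ≤ fef 2 (bellDiag t₁₁ t₂₂ t₃₃) := hle
          _ ≤ 1/2 := hf
      have h00 := hq (0,0)
      have h01 := hq (0,1)
      have h10 := hq (1,0)
      have h11 := hq (1,1)
      simp only [lamv, Matrix.cons_val', Matrix.cons_val_zero, Matrix.cons_val_one,
        Matrix.head_cons, Matrix.empty_val', Matrix.cons_val_fin_one, Matrix.head_fin_const]
        at h00 h01 h10 h11
      refine max_le (max_le ?_ ?_) (max_le ?_ ?_) <;> linarith
    · intro hmax U hU
      have ha : -(t₁₁+t₂₂+t₃₃) ≤ 1/4 :=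
        le_trans (le_trans (le_max_left _ _) (le_max_left _ _)) hmax
      have hbq : t₁₁+t₂₂-t₃₃ ≤ 1/4 :=
        le_trans (le_trans (le_max_right _ _) (le_max_left _ _)) hmax
      have hcq : t₁₁-t₂₂+t₃₃ ≤ 1/4 :=
        le_trans (le_trans (le_max_left _ _) (le_max_right _ _)) hmax
      have hd : -t₁₁+t₂₂+t₃₃ ≤ 1/4 :=
        le_trans (le_trans (le_max_right _ _) (le_max_right _ _)) hmax
      have hb : ∀ q, lamv t₁₁ t₂₂ t₃₃ q ≤ (1/2 : ℝ) := by
        intro q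
        rcases q with ⟨a,b⟩
        fin_cases a <;> fin_cases b <;> simp [lamv] <;> linarith
      have hpsd := psd_shift t₁₁ t₂₂ t₃₃ (1/2) hb
      have h := fef_le_of_psd (bellDiag t₁₁ t₂₂ t₃₃) (1/2) hpsd U hU
      exact le_trans h (by norm_num)
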